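/- For real numbers S_r > S_p ≥ 0, C ≥ 1, d_max ≥ 0, natural number R ≥ 1, if ALG ≤ 2(C + d_max·⌊log₂ R⌋)/((S_r - S_p)(1 + ⌊log₂ R⌋)), OPT ≥ (C-1)/((S_r+S_p)·R), and d_max/(S_r+S_p) ≤ OPT, then ALG ≤ (2(S_r+S_p)(R + ⌊log₂ R⌋)/((S_r - S_p)(1 + ⌊log₂ R⌋)))·OPT + 2/((S_r - S_p)(1 + ⌊log₂ R⌋)). -/

import Mathlib

/-- Competitive ratio of multi-robot recursive DFS over a grid polygon. -/
theorem competitive_ratio_grid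
    (Sr Sp ALG OPT C dMax : ℝ) (R : ℕ)
    (hSp : 0 ≤ Sp) (hSr : Sp < Sr) (hR : 1 ≤ R) (hC : 1 ≤ C) (hd : 0 ≤ dMax)
    (hOPTpos : 0 < OPT)
    (hALG : ALG ≤ 2 * (C + dMax * (Nat.log 2 R : ℝ)) /
      ((Sr - Sp) * (1 + (Nat.log 2 R : ℝ))))
    (hOPT : OPT ≥ (C - 1) / ((Sr + Sp) * (R : ℝ)))
    (hdOPT : dMax / (Sr + Sp) ≤ OPT) :
    ALG ≤ (2 * (Sr + Sp) * ((R : ℝ) + (Nat.log 2 R : ℝ)) /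
        ((Sr - Sp) * (1 + (Nat.log 2 R : ℝ)))) * OPT +
      2 / ((Sr - Sp) * (1 + (Nat.log 2 R : ℝ))) := by
  set L : ℝ := (Nat.log 2 R : ℝ) with hLdef
  have hL : 0 ≤ L := Nat.cast_nonneg _
  have hSum : 0 < Sr + Sp := by linarith
  have hRpos : (0:ℝ) < (R:ℝ) := by exact_mod_cast Nat.pos_of_ne_zero (by omega)
  have hD : 0 < (Sr - Sp) * (1 + L) := by
    apply mul_pos (by linarith) (by linarith)
  have h1 : C - 1 ≤ (Sr + Sp) * (R:ℝ) * OPT := by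
    have := (div_le_iff₀ (mul_pos hSum hRpos)).mp hOPT
    linarith [this]
  have h2 : dMax ≤ (Sr + Sp) * OPT := by
    have := (div_le_iff₀ hSum).mp hdOPT
    linarith [this]
  have key : C + dMax * L ≤ (Sr + Sp) * ((R:ℝ) + L) * OPT + 1 := by
    have h3 : dMax * L ≤ (Sr + Sp) * OPT * L := by
      exact mul_le_mul_of_nonneg_right h2 hL
    nlinarith
  calc ALG ≤ 2 * (C + dMax * L) / ((Sr - Sp) * (1 + L)) := hALG
    _ ≤ 2 * ((Sr + Sp) * ((R:ℝ) + L) * OPT + 1) / ((Sr - Sp) * (1 + L)) := by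
        gcongr
    _ = (2 * (Sr + Sp) * ((R:ℝ) + L) / ((Sr - Sp) * (1 + L))) * OPT +
        2 / ((Sr - Sp) * (1 + L)) := by
        field_simp
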